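/- For every real x and every natural number n ≥ 1, |e^{ix} - ∑_{k=0}^{n-1} (ix)^k/k! - (n/(2(n+1)))·(ix)^n/n!| ≤ ((n+2)/(2(n+1)))·|x|^n/n! (Prawitz's inequality). -/

import Mathlib

open Real Set Complex intervalIntegral

lemma hasDerivAt_q (y : ℝ) :
    HasDerivAt (fun v => Real.sin v - v * Real.cos v) (y * Real.sin y) y := by
  have h1 := (Real.hasDerivAt_sin y).sub ((hasDerivAt_id y).mul (Real.hasDerivAt_cos y))
  simp only [id_eq] at h1
  refine (h1).congr_deriv ?_
  ring

lemma q_nonneg {u : ℝ} (h0 : 0 ≤ u) (h1 : u ≤ π) : 0 ≤ Real.sin u - u * Real.cos u := by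
  have hmono : MonotoneOn (fun v => Real.sin v - v * Real.cos v) (Icc 0 π) := by
    apply monotoneOn_of_deriv_nonneg (convex_Icc 0 π)
    · exact fun y _ => ((hasDerivAt_q y).continuousAt).continuousWithinAt
    · exact fun y _ => ((hasDerivAt_q y).differentiableAt).differentiableWithinAt
    · intro y hy
      rw [(hasDerivAt_q y).deriv]
      rw [interior_Icc] at hy
      exact mul_nonneg hy.1.le (Real.sin_nonneg_of_nonneg_of_le_pi hy.1.le hy.2.le)
  have := hmono (left_mem_Icc.2 Real.pi_pos.le) ⟨h0, h1⟩ h0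
  simpa using this

lemma k_nonneg {y : ℝ} (h0 : 0 ≤ y) (h1 : y ≤ 2*π) :
    0 ≤ 2 - 2 * Real.cos y - y * Real.sin y := by
  have hu0 : 0 ≤ y/2 := by linarith
  have hu1 : y/2 ≤ π := by linarith
  have hq := q_nonneg hu0 hu1
  have hs : 0 ≤ Real.sin (y/2) := Real.sin_nonneg_of_nonneg_of_le_pi hu0 hu1
  have hcos : Real.cos y = 1 - 2 * Real.sin (y/2)^2 := by
    have h1 : Real.cos (2*(y/2)) = 2*Real.cos (y/2)^2 - 1 := Real.cos_two_mul _
    rw [show 2*(y/2) = y by ring] at h1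
    nlinarith [Real.sin_sq_add_cos_sq (y/2)]
  have hsin : Real.sin y = 2 * Real.sin (y/2) * Real.cos (y/2) := by
    have := Real.sin_two_mul (y/2)
    rw [← this]; ring_nf
  rw [hcos, hsin]
  nlinarith [mul_nonneg hs hq]

lemma h_nonneg {y : ℝ} (h0 : 0 ≤ y) :
    0 ≤ 2*y - 3 * Real.sin y + y * Real.cos y := by
  rcases le_or_gt y (2*π) with hy | hy
  · -- monotone on [0, 2π]
    have hd : ∀ v : ℝ, HasDerivAt (fun w => 2*w - 3 * Real.sin w + w * Real.cos w)
        (2 - 2 * Real.cos v - v * Real.sin v) v := by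
      intro v
      have h1 := (((hasDerivAt_id v).const_mul (2:ℝ)).sub ((Real.hasDerivAt_sin v).const_mul 3)).add
        ((hasDerivAt_id v).mul (Real.hasDerivAt_cos v))
      simp only [id_eq] at h1
      refine (h1).congr_deriv ?_
      ring
    have hmono : MonotoneOn (fun w => 2*w - 3 * Real.sin w + w * Real.cos w) (Icc 0 (2*π)) := by
      apply monotoneOn_of_deriv_nonneg (convex_Icc 0 (2*π))
      · exact fun v _ => ((hd v).continuousAt).continuousWithinAt
      · exact fun v _ => ((hd v).differentiableAt).differentiableWithinAt
      · intro v hv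
        rw [(hd v).deriv, interior_Icc] at *
        exact k_nonneg hv.1.le hv.2.le
    have h2π : (0:ℝ) ≤ 2*π := by positivity
    have := hmono (left_mem_Icc.2 h2π) ⟨h0, hy⟩ h0
    simpa using this
  · have hsin := Real.neg_one_le_sin y
    have hsin2 := Real.sin_le_one y
    have hcos := Real.neg_one_le_cos y
    have hpi := Real.pi_gt_three
    nlinarith [Real.neg_one_le_cos y, mul_le_mul_of_nonneg_left (Real.neg_one_le_cos y) h0]

noncomputable def PAB : ℕ → ℝ → ℝ × ℝ
  | 0, x => (Real.cos x, Real.sin x)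
  | (n+1), x => ((n+1 : ℝ) * (PAB n x).2, (n+1 : ℝ) * (x^n - (PAB n x).1))

noncomputable def Af (n : ℕ) (x : ℝ) : ℝ := (PAB n x).1
noncomputable def Bf (n : ℕ) (x : ℝ) : ℝ := (PAB n x).2

lemma Af_zero (x : ℝ) : Af 0 x = Real.cos x := rfl
lemma Bf_zero (x : ℝ) : Bf 0 x = Real.sin x := rfl
lemma Af_succ (n : ℕ) (x : ℝ) : Af (n+1) x = (n+1 : ℝ) * Bf n x := rfl
lemma Bf_succ (n : ℕ) (x : ℝ) : Bf (n+1) x = (n+1 : ℝ) * (x^n - Af n x) := rfl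

lemma Af_one (x : ℝ) : Af 1 x = Real.sin x := by simp [Af_succ, Bf_zero]
lemma Bf_one (x : ℝ) : Bf 1 x = 1 - Real.cos x := by simp [Bf_succ, Af_zero]

lemma AB_deriv (n : ℕ) (x : ℝ) :
    HasDerivAt (Af (n+1)) ((n+1 : ℝ) * x^n - Bf (n+1) x) x ∧
    HasDerivAt (Bf (n+1)) (Af (n+1) x) x := by
  induction n generalizing x with
  | zero =>
    constructor
    · have h : HasDerivAt (Af 1) (Real.cos x) x := by
        have := Real.hasDerivAt_sin x
        apply this.congr_of_eventuallyEq
        filter_upwards with y using (Af_one y)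
      convert h using 1
      rw [Bf_one]; ring
    · have h0 : HasDerivAt (fun y:ℝ => 1 - Real.cos y) (Real.sin x) x := by
        simpa using (Real.hasDerivAt_cos x).const_sub 1
      have h : HasDerivAt (Bf 1) (Real.sin x) x := by
        apply h0.congr_of_eventuallyEq
        filter_upwards with y using (Bf_one y)
      convert h using 1
      rw [Af_one]
  | succ m ih =>
    constructor
    · have h : HasDerivAt (Af (m+2)) ((m+2:ℝ) * Af (m+1) x) x := by
        have := ((ih (x := x)).2).const_mul ((m+2 : ℝ))
        apply this.congr_of_eventuallyEq
        filter_upwards with y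
        rw [Af_succ]; push_cast; ring
      convert h using 1
      rw [Bf_succ]; push_cast; ring
    · have h : HasDerivAt (Bf (m+2)) ((m+2:ℝ) * ((m+1:ℝ)*x^m - ((m+1:ℝ)*x^m - Bf (m+1) x))) x := by
        have hx : HasDerivAt (fun y : ℝ => y^(m+1)) ((m+1:ℝ)*x^m) x := by
          simpa using hasDerivAt_pow (m+1) x
        have := ((hx.sub (ih (x := x)).1).const_mul ((m+2 : ℝ)))
        apply this.congr_of_eventuallyEq
        filter_upwards with y
        rw [Bf_succ]; simp only [Pi.sub_apply]; push_cast; ring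
      convert h using 1
      rw [Af_succ]; push_cast; ring

lemma AB_at_zero (n : ℕ) : Af (n+1) 0 = 0 ∧ Bf (n+1) 0 = 0 := by
  induction n with
  | zero => simp [Af_one, Bf_one]
  | succ m ih =>
    constructor
    · rw [Af_succ, ih.2]; ring
    · rw [Bf_succ, ih.1]; simp

lemma rep (n : ℕ) (x : ℝ) :
    Complex.exp (Complex.I * x) = (∑ k ∈ Finset.range n, (Complex.I * x) ^ k / (k.factorial : ℂ))
      + Complex.I ^ n * ((Af n x : ℂ) + (Bf n x : ℂ) * Complex.I) / (n.factorial : ℂ) := by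
  induction n with
  | zero =>
    simp only [Finset.range_zero, Finset.sum_empty, pow_zero, Nat.factorial_zero, Af_zero, Bf_zero]
    rw [mul_comm Complex.I (x:ℂ), Complex.exp_mul_I]
    push_cast [Complex.ofReal_cos x, Complex.ofReal_sin x]
    ring
  | succ m ih =>
    rw [Finset.sum_range_succ, ih]
    have hfac : ((m+1).factorial : ℂ) = (m+1) * (m.factorial : ℂ) := by
      push_cast [Nat.factorial_succ]; ring
    have hne : (m.factorial : ℂ) ≠ 0 := by exact_mod_cast Nat.cast_ne_zero.2 (Nat.factorial_ne_zero m)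
    have hne2 : ((m:ℂ)+1) ≠ 0 := by
      intro h
      have : ((m:ℂ)+1) = ((m+1 : ℕ) : ℂ) := by push_cast; ring
      rw [this] at h
      exact Nat.cast_ne_zero.2 (Nat.succ_ne_zero m) h
    have hAs : (Af (m+1) x : ℂ) = ((m:ℂ)+1) * (Bf m x : ℂ) := by
      rw [Af_succ]; push_cast; ring
    have hBs : (Bf (m+1) x : ℂ) = ((m:ℂ)+1) * ((x:ℂ)^m - (Af m x : ℂ)) := by
      rw [Bf_succ]; push_cast; ring
    have hIrot : ∀ β γ : ℂ, Complex.I * (β + γ * Complex.I) = -γ + β * Complex.I := by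
      intro β γ; linear_combination γ * Complex.I_sq
    have hIx : (Complex.I * x)^m = Complex.I^m * (x:ℂ)^m := by rw [mul_pow]
    rw [hfac, hAs, hBs, hIx, pow_succ, mul_assoc, hIrot]
    field_simp
    ring

noncomputable def cJ (m : ℕ) (x : ℝ) : ℝ := ∫ t in (0:ℝ)..1, (1-t)^m * Real.cos (x*t)
noncomputable def sJ (m : ℕ) (x : ℝ) : ℝ := ∫ t in (0:ℝ)..1, (1-t)^m * Real.sin (x*t)

lemma deriv_prod_sin (m : ℕ) (x t : ℝ) :
    HasDerivAt (fun u : ℝ => (1-u)^(m+1) * Real.sin (x*u))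
      (-((m+1:ℝ) * ((1-t)^m * Real.sin (x*t))) + x * ((1-t)^(m+1) * Real.cos (x*t))) t := by
  have hin : HasDerivAt (fun u : ℝ => 1-u) (-1 : ℝ) t := by
    simpa using (hasDerivAt_id t).const_sub 1
  have h1 : HasDerivAt (fun u : ℝ => (1-u)^(m+1)) (-((m+1:ℝ) * (1-t)^m)) t := by
    have := (hasDerivAt_pow (m+1) (1-t)).comp t hin
    refine (this).congr_deriv ?_
    push_cast; ring
  have hlin : HasDerivAt (fun u : ℝ => x*u) x t := by
    simpa using (hasDerivAt_id t).const_mul x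
  have h2 : HasDerivAt (fun u : ℝ => Real.sin (x*u)) (Real.cos (x*t) * x) t :=
    (Real.hasDerivAt_sin (x*t)).comp t hlin
  have := h1.mul h2
  refine (this).congr_deriv ?_
  ring

lemma deriv_prod_cos (m : ℕ) (x t : ℝ) :
    HasDerivAt (fun u : ℝ => (1-u)^(m+1) * Real.cos (x*u))
      (-((m+1:ℝ) * ((1-t)^m * Real.cos (x*t))) + (-x) * ((1-t)^(m+1) * Real.sin (x*t))) t := by
  have hin : HasDerivAt (fun u : ℝ => 1-u) (-1 : ℝ) t := by
    simpa using (hasDerivAt_id t).const_sub 1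
  have h1 : HasDerivAt (fun u : ℝ => (1-u)^(m+1)) (-((m+1:ℝ) * (1-t)^m)) t := by
    have := (hasDerivAt_pow (m+1) (1-t)).comp t hin
    refine (this).congr_deriv ?_
    push_cast; ring
  have hlin : HasDerivAt (fun u : ℝ => x*u) x t := by
    simpa using (hasDerivAt_id t).const_mul x
  have h2 : HasDerivAt (fun u : ℝ => Real.cos (x*u)) (-Real.sin (x*t) * x) t :=
    (Real.hasDerivAt_cos (x*t)).comp t hlin
  have := h1.mul h2
  refine (this).congr_deriv ?_
  ring

lemma sJ_rec (m : ℕ) (x : ℝ) : (m+1:ℝ) * sJ m x = x * cJ (m+1) x := by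
  have key : (∫ t in (0:ℝ)..1,
      (-((m+1:ℝ) * ((1-t)^m * Real.sin (x*t))) + x * ((1-t)^(m+1) * Real.cos (x*t)))) = 0 := by
    rw [integral_eq_sub_of_hasDerivAt (fun t _ => deriv_prod_sin m x t)
      (by apply Continuous.intervalIntegrable; fun_prop)]
    simp [zero_pow]
  rw [intervalIntegral.integral_add
      (by apply Continuous.intervalIntegrable; fun_prop)
      (by apply Continuous.intervalIntegrable; fun_prop)] at key
  rw [intervalIntegral.integral_neg, intervalIntegral.integral_const_mul,
      intervalIntegral.integral_const_mul] at key
  unfold sJ cJ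
  linarith [key]

lemma cJ_rec (m : ℕ) (x : ℝ) : (m+1:ℝ) * cJ m x = 1 - x * sJ (m+1) x := by
  have key : (∫ t in (0:ℝ)..1,
      (-((m+1:ℝ) * ((1-t)^m * Real.cos (x*t))) + (-x) * ((1-t)^(m+1) * Real.sin (x*t)))) = 0 - 1 := by
    rw [integral_eq_sub_of_hasDerivAt (fun t _ => deriv_prod_cos m x t)
      (by apply Continuous.intervalIntegrable; fun_prop)]
    simp [zero_pow]
  rw [intervalIntegral.integral_add
      (by apply Continuous.intervalIntegrable; fun_prop)
      (by apply Continuous.intervalIntegrable; fun_prop)] at key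
  rw [intervalIntegral.integral_neg, intervalIntegral.integral_const_mul,
      intervalIntegral.integral_const_mul] at key
  unfold sJ cJ
  linarith [key]
-- appended to main
lemma cJ0 (x : ℝ) : x * cJ 0 x = Real.sin x := by
  have key : (∫ t in (0:ℝ)..1, x * ((1-t)^0 * Real.cos (x*t))) = Real.sin (x*1) - Real.sin (x*0) := by
    apply integral_eq_sub_of_hasDerivAt (f := fun u : ℝ => Real.sin (x*u))
    · intro t _
      have hlin : HasDerivAt (fun u : ℝ => x*u) x t := by
        simpa using (hasDerivAt_id t).const_mul x
      have := (Real.hasDerivAt_sin (x*t)).comp t hlin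
      refine (this).congr_deriv ?_
      simp; ring
    · apply Continuous.intervalIntegrable; fun_prop
  rw [intervalIntegral.integral_const_mul] at key
  unfold cJ
  simpa using key

lemma sJ0 (x : ℝ) : x * sJ 0 x = 1 - Real.cos x := by
  have key : (∫ t in (0:ℝ)..1, x * ((1-t)^0 * Real.sin (x*t)))
      = (-Real.cos (x*1)) - (-Real.cos (x*0)) := by
    apply integral_eq_sub_of_hasDerivAt (f := fun u : ℝ => -Real.cos (x*u))
    · intro t _
      have hlin : HasDerivAt (fun u : ℝ => x*u) x t := by
        simpa using (hasDerivAt_id t).const_mul x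
      have := ((Real.hasDerivAt_cos (x*t)).comp t hlin).neg
      refine (this).congr_deriv ?_
      simp; ring
    · apply Continuous.intervalIntegrable; fun_prop
  rw [intervalIntegral.integral_const_mul] at key
  unfold sJ
  simpa using key

lemma link (m : ℕ) (x : ℝ) :
    Af (m+1) x = (m+1:ℝ) * x^(m+1) * cJ m x ∧ Bf (m+1) x = (m+1:ℝ) * x^(m+1) * sJ m x := by
  induction m with
  | zero =>
    constructor
    · rw [Af_one]
      have := cJ0 x
      push_cast
      nlinarith [cJ0 x]
    · rw [Bf_one]
      have h := sJ0 x
      have h2 := cJ_rec 0 x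
      push_cast
      -- Bf 1 = 1 - cos x = x * sJ 0 x ; need  1*x^1*sJ 0 x
      nlinarith [sJ0 x]
  | succ k ih =>
    constructor
    · rw [Af_succ, ih.2]
      have h := sJ_rec k x
      push_cast
      linear_combination ((k:ℝ)+2) * x^(k+1) * h
    · rw [Bf_succ, ih.1]
      have h := cJ_rec k x
      push_cast
      linear_combination (-((k:ℝ)+2) * x^(k+1)) * h

lemma int_pow (k : ℕ) : (∫ a in (0:ℝ)..1, (1-a)^k) = 1/((k:ℝ)+1) := by
  have key : (∫ a in (0:ℝ)..1, (1-a)^k)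
      = (-(1-(1:ℝ))^(k+1)/((k:ℝ)+1)) - (-(1-(0:ℝ))^(k+1)/((k:ℝ)+1)) := by
    apply integral_eq_sub_of_hasDerivAt (f := fun a : ℝ => -(1-a)^(k+1)/((k:ℝ)+1))
    · intro t _
      have hin : HasDerivAt (fun u : ℝ => 1-u) (-1 : ℝ) t := by
        simpa using (hasDerivAt_id t).const_sub 1
      have h1 : HasDerivAt (fun u : ℝ => (1-u)^(k+1)) (-((k+1:ℝ) * (1-t)^k)) t := by
        have := (hasDerivAt_pow (k+1) (1-t)).comp t hin
        refine (this).congr_deriv ?_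
        push_cast; ring
      have := (h1.neg).div_const ((k:ℝ)+1)
      refine (this).congr_deriv ?_
      have hk : ((k:ℝ)+1) ≠ 0 := by positivity
      field_simp
    · apply Continuous.intervalIntegrable; fun_prop
  rw [key]
  norm_num
  ring

lemma mix (m : ℕ) (x : ℝ) :
    x*(((m:ℝ)+4)*(1 - ((m:ℝ)+2)*cJ (m+1) x) - ((m:ℝ)+2)*x*sJ (m+1) x)
      = ((m:ℝ)+2)*((m:ℝ)+1) *
        ∫ a in (0:ℝ)..1, (1-a)^m * (2*(x*a) - 3*Real.sin (x*a) + (x*a)*Real.cos (x*a)) := by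
  have hsplit : (∫ a in (0:ℝ)..1, (1-a)^m * (2*(x*a) - 3*Real.sin (x*a) + (x*a)*Real.cos (x*a)))
      = 2*x*(1/((m:ℝ)+1) - 1/((m:ℝ)+2)) - 3*sJ m x + x*(cJ m x - cJ (m+1) x) := by
    have e1 : (∫ a in (0:ℝ)..1, (1-a)^m * (2*(x*a) - 3*Real.sin (x*a) + (x*a)*Real.cos (x*a)))
        = ∫ a in (0:ℝ)..1, ((2*x)*((1-a)^m - (1-a)^(m+1)) - 3*((1-a)^m*Real.sin (x*a))
            + x*((1-a)^m*Real.cos (x*a) - (1-a)^(m+1)*Real.cos (x*a))) := by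
      apply intervalIntegral.integral_congr
      intro a _
      ring
    rw [e1]
    rw [intervalIntegral.integral_add (by apply Continuous.intervalIntegrable; fun_prop)
        (by apply Continuous.intervalIntegrable; fun_prop),
      intervalIntegral.integral_sub (by apply Continuous.intervalIntegrable; fun_prop)
        (by apply Continuous.intervalIntegrable; fun_prop),
      intervalIntegral.integral_const_mul, intervalIntegral.integral_const_mul,
      intervalIntegral.integral_const_mul,
      intervalIntegral.integral_sub (by apply Continuous.intervalIntegrable; fun_prop)
        (by apply Continuous.intervalIntegrable; fun_prop),
      intervalIntegral.integral_sub (by apply Continuous.intervalIntegrable; fun_prop)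
        (by apply Continuous.intervalIntegrable; fun_prop),
      int_pow m, int_pow (m+1)]
    unfold cJ sJ
    push_cast
    ring
  have expand : ((m:ℝ)+2)*((m:ℝ)+1) * (2*x*(1/((m:ℝ)+1) - 1/((m:ℝ)+2)) - 3*sJ m x + x*(cJ m x - cJ (m+1) x))
      = 2*x - 3*((m:ℝ)+2)*((m:ℝ)+1)*sJ m x + ((m:ℝ)+2)*((m:ℝ)+1)*x*(cJ m x - cJ (m+1) x) := by
    have hm1 : ((m:ℝ)+1) ≠ 0 := by positivity
    have hm2 : ((m:ℝ)+2) ≠ 0 := by positivity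
    field_simp
    ring
  rw [hsplit, expand]
  have h1 := sJ_rec m x
  have h2 := cJ_rec m x
  linear_combination (3*((m:ℝ)+2)) * h1 + (-((m:ℝ)+2)*x) * h2

lemma R_nonneg {n : ℕ} (hn : 1 ≤ n) {x : ℝ} (hx : 0 ≤ x) :
    0 ≤ ((n:ℝ)+2)*(x^n - Af n x) - x * Bf n x := by
  obtain ⟨m, rfl⟩ : ∃ m, n = m + 1 := ⟨n-1, by omega⟩
  rcases m with _ | k
  · rw [Af_one, Bf_one]
    push_cast
    nlinarith [h_nonneg hx]
  · have hA := (link (k+1) x).1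
    have hB := (link (k+1) x).2
    rw [hA, hB]
    have hint : 0 ≤ ∫ a in (0:ℝ)..1, (1-a)^k * (2*(x*a) - 3*Real.sin (x*a) + (x*a)*Real.cos (x*a)) := by
      apply intervalIntegral.integral_nonneg (by norm_num)
      intro a ha
      apply mul_nonneg (pow_nonneg (by linarith [ha.2]) k)
      have hxa : 0 ≤ x*a := mul_nonneg hx ha.1
      nlinarith [h_nonneg hxa]
    have hxRnn : 0 ≤ x*(((k:ℝ)+4)*(1 - ((k:ℝ)+2)*cJ (k+1) x) - ((k:ℝ)+2)*x*sJ (k+1) x) := by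
      rw [mix k x]
      have hc : (0:ℝ) ≤ ((k:ℝ)+2)*((k:ℝ)+1) := by positivity
      exact mul_nonneg hc hint
    rcases eq_or_lt_of_le hx with rfl | hxpos
    · norm_num
    · have hRnn : 0 ≤ (((k:ℝ)+4)*(1 - ((k:ℝ)+2)*cJ (k+1) x) - ((k:ℝ)+2)*x*sJ (k+1) x) :=
        (mul_nonneg_iff_of_pos_left hxpos).1 hxRnn
      push_cast
      nlinarith [mul_nonneg (pow_nonneg hx (k+2)) hRnn]

noncomputable def Ff (n : ℕ) (x : ℝ) : ℝ :=
  x^(2*n) + n*x^n*Af n x - (n+1)*(Af n x*Af n x + Bf n x*Bf n x)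

lemma F_deriv (m : ℕ) (x : ℝ) :
    HasDerivAt (Ff (m+1))
      (((m:ℝ)+1)*x^m * ((((m:ℝ)+1)+2)*(x^(m+1) - Af (m+1) x) - x*Bf (m+1) x)) x := by
  have hA := (AB_deriv m x).1
  have hB := (AB_deriv m x).2
  have h1 : HasDerivAt (fun y : ℝ => y^(2*(m+1))) ((2*(m:ℝ)+2)*x^(2*m+1)) x := by
    have := hasDerivAt_pow (2*(m+1)) x
    have e : 2*(m+1)-1 = 2*m+1 := by omega
    rw [e] at this
    refine (this).congr_deriv ?_
    push_cast; ring
  have h2 : HasDerivAt (fun y : ℝ => (m+1:ℕ)*y^(m+1)*Af (m+1) y)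
      (((m:ℝ)+1)*(((m:ℝ)+1)*x^m)*Af (m+1) x + ((m:ℝ)+1)*x^(m+1)*(((m:ℝ)+1)*x^m - Bf (m+1) x)) x := by
    have hp : HasDerivAt (fun y : ℝ => (m+1:ℕ)*y^(m+1)) (((m:ℝ)+1)*(((m:ℝ)+1)*x^m)) x := by
      have := (hasDerivAt_pow (m+1) x).const_mul ((m+1:ℕ):ℝ)
      have e : m+1-1 = m := by omega
      rw [e] at this
      refine (this).congr_deriv ?_
      push_cast; ring
    have := hp.mul hA
    refine (this).congr_deriv ?_
    push_cast; ring
  have h3 : HasDerivAt (fun y : ℝ => Af (m+1) y * Af (m+1) y + Bf (m+1) y * Bf (m+1) y)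
      ((((m:ℝ)+1)*x^m - Bf (m+1) x)*Af (m+1) x + Af (m+1) x*(((m:ℝ)+1)*x^m - Bf (m+1) x)
        + (Af (m+1) x*Bf (m+1) x + Bf (m+1) x*Af (m+1) x)) x :=
    (hA.mul hA).add (hB.mul hB)
  have htot := (h1.add h2).sub (h3.const_mul (((m+1:ℕ):ℝ)+1))
  have : Ff (m+1) = fun y : ℝ => (y^(2*(m+1)) + (m+1:ℕ)*y^(m+1)*Af (m+1) y)
      - (((m+1:ℕ):ℝ)+1)*(Af (m+1) y * Af (m+1) y + Bf (m+1) y * Bf (m+1) y) := by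
    funext y
    unfold Ff
    push_cast
    ring
  rw [this]
  refine (htot).congr_deriv ?_
  push_cast
  ring

lemma F_nonneg {n : ℕ} (hn : 1 ≤ n) {x : ℝ} (hx : 0 ≤ x) : 0 ≤ Ff n x := by
  obtain ⟨m, rfl⟩ : ∃ m, n = m + 1 := ⟨n-1, by omega⟩
  have hmono : MonotoneOn (Ff (m+1)) (Ici 0) := by
    apply monotoneOn_of_deriv_nonneg (convex_Ici 0)
    · exact fun y _ => ((F_deriv m y).continuousAt).continuousWithinAt
    · exact fun y _ => ((F_deriv m y).differentiableAt).differentiableWithinAt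
    · intro y hy
      rw [interior_Ici] at hy
      rw [(F_deriv m y).deriv]
      have hy0 : (0:ℝ) ≤ y := le_of_lt hy
      have hR := R_nonneg (n := m+1) (by omega) hy0
      push_cast at hR ⊢
      have h1 : (0:ℝ) ≤ ((m:ℝ)+1)*y^m := by positivity
      nlinarith [mul_nonneg h1 hR]
  have hF0 : Ff (m+1) 0 = 0 := by
    unfold Ff
    rw [(AB_at_zero m).1, (AB_at_zero m).2]
    rw [zero_pow (by omega : 2*(m+1) ≠ 0), zero_pow (by omega : m+1 ≠ 0)]
    ring
  have := hmono (self_mem_Ici) (mem_Ici.2 hx) hx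
  rw [hF0] at this
  exact this

lemma key_ineq (n : ℕ) (hn : 1 ≤ n) (x : ℝ) (hx : 0 ≤ x) :
    ‖Complex.exp (Complex.I * x) -
      ∑ k ∈ Finset.range n, (Complex.I * x) ^ k / (k.factorial : ℂ) -
      ((n : ℂ) / (2 * ((n : ℂ) + 1))) * (Complex.I * x) ^ n / (n.factorial : ℂ)‖ ≤
      ((n : ℝ) + 2) / (2 * ((n : ℝ) + 1)) * |x| ^ n / (n.factorial : ℝ) := by
  have hfacpos : (0:ℝ) < (n.factorial : ℝ) := by positivity
  have hfacC : ((n.factorial : ℕ) : ℂ) ≠ 0 := by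
    exact_mod_cast Nat.cast_ne_zero.2 (Nat.factorial_ne_zero n)
  have hd : ((n:ℂ)+1) ≠ 0 := by
    intro h
    have : ((n:ℂ)+1) = ((n+1 : ℕ) : ℂ) := by push_cast; ring
    rw [this] at h
    exact Nat.cast_ne_zero.2 (Nat.succ_ne_zero n) h
  -- rewrite the complex expression
  have hz : Complex.exp (Complex.I * x) -
      (∑ k ∈ Finset.range n, (Complex.I * x) ^ k / (k.factorial : ℂ)) -
      ((n : ℂ) / (2 * ((n : ℂ) + 1))) * (Complex.I * x) ^ n / (n.factorial : ℂ)
      = Complex.I^n * (((Af n x - (n:ℝ)/(2*((n:ℝ)+1)) * x^n : ℝ) : ℂ) + ((Bf n x : ℝ) : ℂ) * Complex.I)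
        / (n.factorial : ℂ) := by
    rw [rep n x]
    have hIx : (Complex.I * x)^n = Complex.I^n * (x:ℂ)^n := mul_pow _ _ _
    rw [hIx]
    push_cast
    field_simp
    ring
  rw [hz]
  rw [norm_div, norm_mul, norm_pow, Complex.norm_I, one_pow, one_mul]
  have hnormfac : ‖((n.factorial : ℕ) : ℂ)‖ = (n.factorial : ℝ) := by
    rw [Complex.norm_natCast]
  rw [hnormfac]
  have hM : (0:ℝ) ≤ ((n : ℝ) + 2) / (2 * ((n : ℝ) + 1)) * |x| ^ n := by positivity
  have hmain : ‖((Af n x - (n:ℝ)/(2*((n:ℝ)+1)) * x^n : ℝ) : ℂ) + ((Bf n x : ℝ) : ℂ) * Complex.I‖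
      ≤ ((n : ℝ) + 2) / (2 * ((n : ℝ) + 1)) * |x| ^ n := by
    rw [Complex.norm_def, Complex.normSq_add_mul_I]
    rw [show ((n : ℝ) + 2) / (2 * ((n : ℝ) + 1)) * |x| ^ n
        = Real.sqrt ((((n : ℝ) + 2) / (2 * ((n : ℝ) + 1)) * |x| ^ n)^2) from
      (Real.sqrt_sq hM).symm]
    apply Real.sqrt_le_sqrt
    rw [_root_.abs_of_nonneg hx]
    have hF := F_nonneg hn hx
    unfold Ff at hF
    have hd1 : (0:ℝ) < (n:ℝ)+1 := by positivity
    have e : (((n : ℝ) + 2) / (2 * ((n : ℝ) + 1)) * x ^ n)^2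
        - ((Af n x - (n:ℝ)/(2*((n:ℝ)+1)) * x^n)^2 + (Bf n x)^2)
        = (x^(2*n) + n*x^n*Af n x - ((n:ℝ)+1)*(Af n x*Af n x + Bf n x*Bf n x))/((n:ℝ)+1) := by
      field_simp
      ring
    nlinarith [hF, e, div_nonneg hF hd1.le]
  gcongr
theorem prawitz_inequality (x : ℝ) (n : ℕ) (hn : 1 ≤ n) :
    ‖Complex.exp (Complex.I * x) -
      ∑ k ∈ Finset.range n, (Complex.I * x) ^ k / (k.factorial : ℂ) -
      ((n : ℂ) / (2 * ((n : ℂ) + 1))) * (Complex.I * x) ^ n / (n.factorial : ℂ)‖ ≤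
      ((n : ℝ) + 2) / (2 * ((n : ℝ) + 1)) * |x| ^ n / (n.factorial : ℝ) := by
  rcases le_total 0 x with hx | hx
  · exact key_ineq n hn x hx
  · have h := key_ineq n hn (-x) (by linarith)
    have hconj : Complex.exp (Complex.I * ((-x : ℝ) : ℂ)) -
        (∑ k ∈ Finset.range n, (Complex.I * ((-x:ℝ):ℂ)) ^ k / (k.factorial : ℂ)) -
        ((n : ℂ) / (2 * ((n : ℂ) + 1))) * (Complex.I * ((-x:ℝ):ℂ)) ^ n / (n.factorial : ℂ)
        = (starRingEnd ℂ) (Complex.exp (Complex.I * x) -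
          (∑ k ∈ Finset.range n, (Complex.I * (x:ℂ)) ^ k / (k.factorial : ℂ)) -
          ((n : ℂ) / (2 * ((n : ℂ) + 1))) * (Complex.I * (x:ℂ)) ^ n / (n.factorial : ℂ)) := by
      rw [map_sub, map_sub, map_sum]
      congr 1
      congr 1
      · rw [← Complex.exp_conj]
        congr 1
        rw [map_mul, Complex.conj_I, Complex.conj_ofReal]
        push_cast
        ring
      · apply Finset.sum_congr rfl
        intro k _
        rw [map_div₀, map_pow, map_mul, Complex.conj_I, Complex.conj_ofReal, map_natCast]
        push_cast
        ring_nf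
      · rw [map_div₀, map_mul, map_pow, map_mul, Complex.conj_I, Complex.conj_ofReal,
          map_natCast, map_div₀, map_natCast, map_mul, map_add, map_natCast, map_one,
          map_ofNat]
        push_cast
        ring_nf
    rw [hconj] at h
    rw [RCLike.norm_conj] at h
    rw [abs_neg] at h
    exact h
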